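/- arXiv:1706.08342 — 4 statements merged into one kernel-verified Lean document; each statement's English description precedes it below -/
import Mathlib

section
/- Let n > d ≥ 1 be integers and L : [0,1] → ℝ be a nonnegative continuous concave function with L(0) = 0. Then ∫₀¹ (1−s)^{n−d−1}(d − n s) L(s)^{d−1} ds ≥ 0. -/
/-- The antiderivative computation: `∫₀¹ (1-s)^(n-d-1) (d - n s) s^(d-1) ds = 0`. -/
lemma aux_integral_zero (d m : ℕ) (hd : 1 ≤ d) :
    (∫ s in (0:ℝ)..1,
      (1 - s) ^ m * (((d : ℝ)) - (d + m + 1 : ℕ) * s) * s ^ (d - 1)) = 0 := by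
  obtain ⟨e, rfl⟩ : ∃ e, d = e + 1 := ⟨d - 1, by omega⟩
  have key : ∀ s : ℝ, HasDerivAt (fun s : ℝ => s ^ (e + 1) * (1 - s) ^ (m + 1))
      ((1 - s) ^ m * (((e + 1 : ℕ) : ℝ) - ((e + 1) + m + 1 : ℕ) * s) * s ^ ((e + 1) - 1)) s := by
    intro s
    have h1 : HasDerivAt (fun s : ℝ => s ^ (e + 1))
        (((e + 1 : ℕ) : ℝ) * s ^ e * 1) s := by
      simpa using (hasDerivAt_pow (e + 1) s)
    have h2 : HasDerivAt (fun s : ℝ => (1 - s) ^ (m + 1))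
        (((m + 1 : ℕ) : ℝ) * (1 - s) ^ m * (-1)) s := by
      have hbase : HasDerivAt (fun s : ℝ => 1 - s) (-1) s := by
        simpa using (hasDerivAt_id s).const_sub (1 : ℝ)
      simpa using hbase.fun_pow (m + 1)
    have := h1.fun_mul h2
    refine this.congr_deriv ?_
    push_cast
    ring
  have hint : IntervalIntegrable (fun s : ℝ =>
      (1 - s) ^ m * (((e + 1 : ℕ) : ℝ) - ((e + 1) + m + 1 : ℕ) * s) * s ^ ((e + 1) - 1))
      MeasureTheory.volume 0 1 := by
    apply Continuous.intervalIntegrable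
    fun_prop
  have heq := intervalIntegral.integral_eq_sub_of_hasDerivAt (fun s _ => key s) hint
  rw [heq]
  simp

/-- For integers `n > d ≥ 1` and `L : [0,1] → ℝ` nonnegative, continuous, concave with
`L 0 = 0`, one has `∫₀¹ (1−s)^(n−d−1)(d − n s) L(s)^(d−1) ds ≥ 0`. -/
theorem integral_nonneg_of_concave (n d : ℕ) (hd : 1 ≤ d) (hn : d < n) (L : ℝ → ℝ)
    (hcont : ContinuousOn L (Set.Icc 0 1))
    (hnn : ∀ s ∈ Set.Icc (0 : ℝ) 1, 0 ≤ L s)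
    (hconc : ConcaveOn ℝ (Set.Icc 0 1) L) (h0 : L 0 = 0) :
    0 ≤ ∫ s in (0:ℝ)..1, (1 - s) ^ (n - d - 1) * ((d : ℝ) - n * s) * L s ^ (d - 1) := by
  obtain ⟨m, rfl⟩ : ∃ m, n = d + m + 1 := ⟨n - d - 1, by omega⟩
  have hm : (d + m + 1) - d - 1 = m := by omega
  rw [hm]
  set c : ℝ := (d : ℝ) / (d + m + 1 : ℕ) with hc_def
  have hnpos : (0:ℝ) < (d + m + 1 : ℕ) := by positivity
  have hdpos : (0:ℝ) < (d:ℝ) := by exact_mod_cast hd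
  have hc0 : 0 < c := div_pos hdpos hnpos
  have hc1 : c < 1 := by
    rw [hc_def, div_lt_one hnpos]
    push_cast; linarith
  have hcmem : c ∈ Set.Icc (0:ℝ) 1 := ⟨hc0.le, hc1.le⟩
  have h0mem : (0:ℝ) ∈ Set.Icc (0:ℝ) 1 := by norm_num
  -- concavity consequences
  have hle : ∀ s ∈ Set.Icc (0:ℝ) 1, s ≤ c → s * L c ≤ c * L s := by
    intro s hs hsc
    have ha : 0 ≤ s / c := div_nonneg hs.1 hc0.le
    have hb : 0 ≤ 1 - s / c := by
      rw [sub_nonneg, div_le_one hc0]; exact hsc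
    have := hconc.2 hcmem h0mem ha hb (by ring)
    rw [smul_eq_mul, smul_eq_mul, smul_eq_mul, smul_eq_mul, mul_zero, add_zero,
      div_mul_cancel₀ _ hc0.ne', h0, mul_zero, add_zero] at this
    calc s * L c = c * (s / c * L c) := by field_simp
    _ ≤ c * L s := by
      apply mul_le_mul_of_nonneg_left this hc0.le
  have hge : ∀ s ∈ Set.Icc (0:ℝ) 1, c ≤ s → c * L s ≤ s * L c := by
    intro s hs hcs
    have hspos : 0 < s := lt_of_lt_of_le hc0 hcs
    have ha : 0 ≤ c / s := div_nonneg hc0.le hspos.le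
    have hb : 0 ≤ 1 - c / s := by
      rw [sub_nonneg, div_le_one hspos]; exact hcs
    have := hconc.2 hs h0mem ha hb (by ring)
    rw [smul_eq_mul, smul_eq_mul, smul_eq_mul, smul_eq_mul, mul_zero, add_zero,
      div_mul_cancel₀ _ hspos.ne', h0, mul_zero, add_zero] at this
    calc c * L s = s * (c / s * L s) := by field_simp
    _ ≤ s * L c := by
      apply mul_le_mul_of_nonneg_left this hspos.le
  -- pointwise inequality
  have hpt : ∀ s ∈ Set.Icc (0:ℝ) 1,
      0 ≤ (1 - s) ^ m * ((d : ℝ) - (d + m + 1 : ℕ) * s) *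
        (c ^ (d - 1) * L s ^ (d - 1) - L c ^ (d - 1) * s ^ (d - 1)) := by
    intro s hs
    have hLs : 0 ≤ L s := hnn s hs
    have hLc : 0 ≤ L c := hnn c hcmem
    have hbpow : (0:ℝ) ≤ (1 - s) ^ m := by
      apply pow_nonneg; linarith [hs.2]
    rcases le_total s c with h | h
    · -- s ≤ c : both factors nonneg
      apply mul_nonneg
      · apply mul_nonneg hbpow
        rw [sub_nonneg]
        have h' : s * ((d + m + 1 : ℕ) : ℝ) ≤ (d : ℝ) := (le_div_iff₀ hnpos).mp h
        linarith
      · rw [sub_nonneg]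
        have h1 : s * L c ≤ c * L s := hle s hs h
        have h2 : 0 ≤ s * L c := mul_nonneg hs.1 hLc
        calc L c ^ (d-1) * s ^ (d-1) = (s * L c) ^ (d-1) := by rw [mul_pow]; ring
        _ ≤ (c * L s) ^ (d-1) := pow_le_pow_left₀ h2 h1 _
        _ = c ^ (d-1) * L s ^ (d-1) := mul_pow _ _ _
    · -- c ≤ s : both factors nonpos
      have hA : (1 - s) ^ m * ((d : ℝ) - (d + m + 1 : ℕ) * s) ≤ 0 := by
        apply mul_nonpos_of_nonneg_of_nonpos hbpow
        rw [sub_nonpos]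
        have h' : (d : ℝ) ≤ s * ((d + m + 1 : ℕ) : ℝ) := (div_le_iff₀ hnpos).mp h
        linarith
      have hB : c ^ (d - 1) * L s ^ (d - 1) - L c ^ (d - 1) * s ^ (d - 1) ≤ 0 := by
        rw [sub_nonpos]
        have h1 : c * L s ≤ s * L c := hge s hs h
        have h2 : 0 ≤ c * L s := mul_nonneg hc0.le hLs
        calc c ^ (d-1) * L s ^ (d-1) = (c * L s) ^ (d-1) := (mul_pow _ _ _).symm
        _ ≤ (s * L c) ^ (d-1) := pow_le_pow_left₀ h2 h1 _
        _ = L c ^ (d-1) * s ^ (d-1) := by rw [mul_pow]; ring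
      calc (0:ℝ) = -((1 - s) ^ m * ((d : ℝ) - (d + m + 1 : ℕ) * s)) * 0 := by ring
      _ ≤ -((1 - s) ^ m * ((d : ℝ) - (d + m + 1 : ℕ) * s)) *
            -(c ^ (d - 1) * L s ^ (d - 1) - L c ^ (d - 1) * s ^ (d - 1)) := by
        apply mul_le_mul_of_nonneg_left (by linarith) (by linarith)
      _ = (1 - s) ^ m * ((d : ℝ) - (d + m + 1 : ℕ) * s) *
            (c ^ (d - 1) * L s ^ (d - 1) - L c ^ (d - 1) * s ^ (d - 1)) := by ring
  -- integrability
  have hLcont : ContinuousOn (fun s => L s ^ (d - 1)) (Set.Icc (0:ℝ) 1) := hcont.pow _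
  have hwcont : Continuous (fun s : ℝ => (1 - s) ^ m * ((d : ℝ) - (d + m + 1 : ℕ) * s)) := by
    fun_prop
  have hint1 : IntervalIntegrable
      (fun s => (1 - s) ^ m * ((d : ℝ) - (d + m + 1 : ℕ) * s) * L s ^ (d - 1))
      MeasureTheory.volume 0 1 := by
    apply ContinuousOn.intervalIntegrable
    rw [Set.uIcc_of_le (by norm_num : (0:ℝ) ≤ 1)]
    exact (hwcont.continuousOn).mul hLcont
  have hint2 : IntervalIntegrable
      (fun s => (1 - s) ^ m * ((d : ℝ) - (d + m + 1 : ℕ) * s) * s ^ (d - 1))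
      MeasureTheory.volume 0 1 := by
    apply Continuous.intervalIntegrable
    fun_prop
  -- integrate the pointwise inequality
  have hmain : 0 ≤ ∫ s in (0:ℝ)..1,
      (c ^ (d-1) * ((1 - s) ^ m * ((d : ℝ) - (d + m + 1 : ℕ) * s) * L s ^ (d - 1))
        - L c ^ (d-1) * ((1 - s) ^ m * ((d : ℝ) - (d + m + 1 : ℕ) * s) * s ^ (d - 1))) := by
    apply intervalIntegral.integral_nonneg (by norm_num)
    intro u hu
    have := hpt u hu
    nlinarith [this]
  rw [intervalIntegral.integral_sub (hint1.const_mul _) (hint2.const_mul _),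
    intervalIntegral.integral_const_mul, intervalIntegral.integral_const_mul,
    aux_integral_zero d m hd, mul_zero, sub_zero] at hmain
  have hcpow : 0 < c ^ (d-1) := pow_pos hc0 _
  nlinarith [hmain, hcpow]
end

section
/- Let ψ(t) = c·(1−t²)^{(d−1)/2} on (−1,1) for d ≥ 2 and c > 0 chosen so that ∫_{−1}^1 ψ = 1, and let Ψ be its CDF with inverse Ψ^{−1} : (0,1) → (−1,1). Then L(s) = ψ(Ψ^{−1}(s))^{d/(d−1)} is concave on (0,1). -/
open Set

lemma aux_sqrt_mono {a b : ℝ} (ha : -1 < a) (hab : a < b) (hb : b < 1) :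
    a / Real.sqrt (1 - a ^ 2) < b / Real.sqrt (1 - b ^ 2) := by
  have ha1 : a < 1 := lt_trans hab hb
  have hbm1 : -1 < b := lt_trans ha hab
  have ha2 : (0:ℝ) < 1 - a ^ 2 := by nlinarith
  have hb2 : (0:ℝ) < 1 - b ^ 2 := by nlinarith
  have hsa : 0 < Real.sqrt (1 - a ^ 2) := Real.sqrt_pos.2 ha2
  have hsb : 0 < Real.sqrt (1 - b ^ 2) := Real.sqrt_pos.2 hb2
  rw [div_lt_div_iff₀ hsa hsb]
  rcases le_or_gt 0 a with h0a | h0a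
  · have h0b : 0 < b := lt_of_le_of_lt h0a hab
    have e1 : a * Real.sqrt (1 - b ^ 2) = Real.sqrt (a ^ 2 * (1 - b ^ 2)) := by
      rw [Real.sqrt_mul (sq_nonneg a), Real.sqrt_sq h0a]
    have e2 : b * Real.sqrt (1 - a ^ 2) = Real.sqrt (b ^ 2 * (1 - a ^ 2)) := by
      rw [Real.sqrt_mul (sq_nonneg b), Real.sqrt_sq h0b.le]
    rw [e1, e2]
    apply Real.sqrt_lt_sqrt (by positivity)
    nlinarith
  · rcases le_or_gt b 0 with hb0 | hb0
    · have e1 : (-a) * Real.sqrt (1 - b ^ 2) = Real.sqrt (a ^ 2 * (1 - b ^ 2)) := by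
        rw [Real.sqrt_mul (sq_nonneg a), Real.sqrt_sq_eq_abs, abs_of_nonpos h0a.le]
      have e2 : (-b) * Real.sqrt (1 - a ^ 2) = Real.sqrt (b ^ 2 * (1 - a ^ 2)) := by
        rw [Real.sqrt_mul (sq_nonneg b), Real.sqrt_sq_eq_abs, abs_of_nonpos hb0]
      have key : Real.sqrt (b ^ 2 * (1 - a ^ 2)) < Real.sqrt (a ^ 2 * (1 - b ^ 2)) := by
        apply Real.sqrt_lt_sqrt (by positivity)
        nlinarith
      rw [← e1, ← e2] at key
      nlinarith
    · have h1 : a * Real.sqrt (1 - b ^ 2) < 0 := mul_neg_of_neg_of_pos h0a hsb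
      have h2 : 0 < b * Real.sqrt (1 - a ^ 2) := mul_pos hb0 hsa
      linarith

/-- Let `ψ(t) = c (1−t²)^{(d−1)/2}` on `(−1,1)` (`d ≥ 2`, `c > 0`, total integral 1) with
CDF `Ψ` and inverse `g = Ψ⁻¹ : (0,1) → (−1,1)`. Then `s ↦ ψ(Ψ⁻¹(s))^{d/(d−1)}` is concave
on `(0,1)`. -/
theorem ball_L_concave (d : ℕ) (hd : 2 ≤ d) (c : ℝ) (hc : 0 < c) (ψ Ψ g : ℝ → ℝ)
    (hψ : ∀ t, ψ t = c * (1 - t ^ 2) ^ (((d : ℝ) - 1) / 2))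
    (hint : ∫ t in Set.Ioo (-1 : ℝ) 1, ψ t = 1)
    (hΨ : ∀ p, Ψ p = ∫ t in (-1 : ℝ)..p, ψ t)
    (hg1 : ∀ p ∈ Set.Ioo (-1 : ℝ) 1, g (Ψ p) = p)
    (hg2 : ∀ s ∈ Set.Ioo (0 : ℝ) 1, g s ∈ Set.Ioo (-1 : ℝ) 1 ∧ Ψ (g s) = s) :
    ConcaveOn ℝ (Set.Ioo 0 1) (fun s => ψ (g s) ^ ((d : ℝ) / ((d : ℝ) - 1))) := by
  set e : ℝ := (d : ℝ) with he_def
  have he : (2:ℝ) ≤ e := by rw [he_def]; exact_mod_cast hd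
  have he1 : (0:ℝ) < e - 1 := by linarith
  set p : ℝ := e / (e - 1) with hp_def
  -- continuity of ψ
  have hψc : Continuous ψ := by
    have : Continuous fun t : ℝ => c * (1 - t ^ 2) ^ ((e - 1) / 2) := by
      apply continuous_const.mul
      rw [continuous_iff_continuousAt]
      intro x
      exact ContinuousAt.comp (Real.continuousAt_rpow_const _ _ (Or.inr (by positivity)))
        (by fun_prop)
    convert this using 1
    funext t; rw [hψ t]
  -- positivity of ψ on (-1,1)
  have hψpos : ∀ t ∈ Ioo (-1:ℝ) 1, 0 < ψ t := by
    intro t ht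
    rw [hψ t]
    exact mul_pos hc (Real.rpow_pos_of_pos (by nlinarith [ht.1, ht.2]) _)
  -- derivative of Ψ
  have hΨd : ∀ x : ℝ, HasDerivAt Ψ (ψ x) x := by
    intro x
    have hΨeq : Ψ = fun q => ∫ t in (-1:ℝ)..q, ψ t := funext hΨ
    rw [hΨeq]
    exact intervalIntegral.integral_hasDerivAt_right (hψc.intervalIntegrable _ _)
      hψc.aestronglyMeasurable.stronglyMeasurableAtFilter hψc.continuousAt
  -- strict monotonicity of Ψ on (-1,1)
  have hΨmono : ∀ a b : ℝ, a ∈ Ioo (-1:ℝ) 1 → b ∈ Ioo (-1:ℝ) 1 → a < b → Ψ a < Ψ b := by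
    intro a b haI hbI hab
    have hsplit : Ψ b - Ψ a = ∫ t in a..b, ψ t := by
      rw [hΨ a, hΨ b,
        ← intervalIntegral.integral_add_adjacent_intervals
          (hψc.intervalIntegrable (-1) a) (hψc.intervalIntegrable a b)]
      ring
    have hpos : 0 < ∫ t in a..b, ψ t := by
      apply intervalIntegral.intervalIntegral_pos_of_pos_on (hψc.intervalIntegrable a b)
        (fun x hx => hψpos x ⟨lt_trans haI.1 hx.1, lt_trans hx.2 hbI.2⟩) hab
    linarith
  -- strict monotonicity of g on (0,1)
  have hgmono : ∀ s₁ s₂ : ℝ, s₁ ∈ Ioo (0:ℝ) 1 → s₂ ∈ Ioo (0:ℝ) 1 → s₁ < s₂ → g s₁ < g s₂ := by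
    intro s₁ s₂ h₁ h₂ h12
    by_contra hcon
    push_neg at hcon
    rcases eq_or_lt_of_le hcon with heq | hlt
    · have := (hg2 s₁ h₁).2
      rw [← heq] at this
      rw [(hg2 s₂ h₂).2] at this
      linarith
    · have := hΨmono _ _ (hg2 s₂ h₂).1 (hg2 s₁ h₁).1 hlt
      rw [(hg2 s₁ h₁).2, (hg2 s₂ h₂).2] at this
      linarith
  -- the auxiliary function F and its derivative
  set F : ℝ → ℝ := fun x => c ^ p * (1 - x ^ 2) ^ (e / 2) with hF_def
  set F' : ℝ → ℝ := fun x => c ^ p * (e / 2 * (1 - x ^ 2) ^ (e / 2 - 1) * (-(2 * x))) with hF'_def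
  have hFψ : ∀ t ∈ Ioo (-1:ℝ) 1, ψ t ^ p = F t := by
    intro t ht
    have h1 : (0:ℝ) < 1 - t ^ 2 := by nlinarith [ht.1, ht.2]
    rw [hψ t, Real.mul_rpow hc.le (Real.rpow_nonneg h1.le _), ← Real.rpow_natCast]
    · rw [Real.rpow_natCast, ← Real.rpow_mul h1.le]
      have : (e - 1) / 2 * p = e / 2 := by
        field_simp [hp_def]
        rw [hp_def]; field_simp
      rw [this]
  have hFd : ∀ x ∈ Ioo (-1:ℝ) 1, HasDerivAt F (F' x) x := by
    intro x hx
    have h1 : (0:ℝ) < 1 - x ^ 2 := by nlinarith [hx.1, hx.2]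
    have hinner : HasDerivAt (fun y : ℝ => 1 - y ^ 2) (-(2 * x)) x := by
      simpa using (hasDerivAt_pow 2 x).const_sub 1
    have houter := (Real.hasDerivAt_rpow_const (p := e / 2) (Or.inl h1.ne')).comp x hinner
    exact houter.const_mul _
  -- slope lemma: the slope of L between s₁ < s₂ equals h ξ for some ξ between g s₁ and g s₂
  set L : ℝ → ℝ := fun s => ψ (g s) ^ p with hL_def
  set K : ℝ := c ^ (p - 1) * e with hK_def
  have hKpos : 0 < K := mul_pos (Real.rpow_pos_of_pos hc _) (by linarith)
  set h : ℝ → ℝ := fun t => -K * (t / Real.sqrt (1 - t ^ 2)) with hh_def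
  -- F' ξ = h ξ * ψ ξ on (-1,1)
  have hkey : ∀ ξ ∈ Ioo (-1:ℝ) 1, F' ξ = h ξ * ψ ξ := by
    intro ξ hξ
    have h1 : (0:ℝ) < 1 - ξ ^ 2 := by nlinarith [hξ.1, hξ.2]
    have hS : Real.sqrt (1 - ξ ^ 2) = (1 - ξ ^ 2) ^ ((1:ℝ)/2) := Real.sqrt_eq_rpow _
    have hcc : c ^ p = c ^ (p - 1) * c := by
      rw [← Real.rpow_add_one hc.ne' (p - 1)]; ring_nf
    have hdiv : (1 - ξ ^ 2) ^ ((e - 1) / 2) / (1 - ξ ^ 2) ^ ((1:ℝ)/2)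
        = (1 - ξ ^ 2) ^ (e / 2 - 1) := by
      rw [← Real.rpow_sub h1]; congr 1; ring
    show c ^ p * (e / 2 * (1 - ξ ^ 2) ^ (e / 2 - 1) * -(2 * ξ))
        = -K * (ξ / Real.sqrt (1 - ξ ^ 2)) * ψ ξ
    rw [hψ ξ, hS, hK_def, hcc]
    rw [← hdiv]
    have hSne : (1 - ξ ^ 2) ^ ((1:ℝ)/2) ≠ 0 := (Real.rpow_pos_of_pos h1 _).ne'
    field_simp
  have hslope : ∀ s₁ s₂ : ℝ, s₁ ∈ Ioo (0:ℝ) 1 → s₂ ∈ Ioo (0:ℝ) 1 → s₁ < s₂ →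
      ∃ ξ ∈ Ioo (g s₁) (g s₂), (L s₂ - L s₁) / (s₂ - s₁) = h ξ := by
    intro s₁ s₂ h₁ h₂ h12
    obtain ⟨ht₁, hΨt₁⟩ := hg2 s₁ h₁
    obtain ⟨ht₂, hΨt₂⟩ := hg2 s₂ h₂
    have htlt : g s₁ < g s₂ := hgmono s₁ s₂ h₁ h₂ h12
    have hIccsub : Icc (g s₁) (g s₂) ⊆ Ioo (-1:ℝ) 1 := fun x hx =>
      ⟨lt_of_lt_of_le ht₁.1 hx.1, lt_of_le_of_lt hx.2 ht₂.2⟩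
    have hIoosub : Ioo (g s₁) (g s₂) ⊆ Ioo (-1:ℝ) 1 := fun x hx =>
      hIccsub ⟨hx.1.le, hx.2.le⟩
    have hFc : ContinuousOn F (Icc (g s₁) (g s₂)) := by
      apply Continuous.continuousOn
      apply continuous_const.mul
      rw [continuous_iff_continuousAt]
      intro x
      exact ContinuousAt.comp (Real.continuousAt_rpow_const _ _ (Or.inr (by positivity)))
        (by fun_prop)
    obtain ⟨ξ, hξmem, hξeq⟩ := exists_ratio_hasDerivAt_eq_ratio_slope F F' htlt hFc
      (fun x hx => hFd x (hIoosub hx)) Ψ ψ (fun x _ => (hΨd x).continuousAt.continuousWithinAt)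
      (fun x _ => hΨd x)
    refine ⟨ξ, hξmem, ?_⟩
    have hξI : ξ ∈ Ioo (-1:ℝ) 1 := hIoosub hξmem
    have hψξ : 0 < ψ ξ := hψpos ξ hξI
    rw [hΨt₁, hΨt₂] at hξeq
    have hL₁ : L s₁ = F (g s₁) := hFψ _ ht₁
    have hL₂ : L s₂ = F (g s₂) := hFψ _ ht₂
    rw [hL₁, hL₂]
    rw [div_eq_iff (by linarith : s₂ - s₁ ≠ 0)]
    rw [hkey ξ hξI] at hξeq
    have h2 : (F (g s₂) - F (g s₁)) * ψ ξ = (h ξ * (s₂ - s₁)) * ψ ξ := by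
      linear_combination -hξeq
    exact mul_right_cancel₀ hψξ.ne' h2
  -- conclude concavity via slopes
  have : ConcaveOn ℝ (Ioo (0:ℝ) 1) L := by
    apply concaveOn_of_slope_anti_adjacent (convex_Ioo 0 1)
    intro x y z hx hz hxy hyz
    have hy : y ∈ Ioo (0:ℝ) 1 := ⟨lt_trans hx.1 hxy, lt_trans hyz hz.2⟩
    obtain ⟨ξ, hξ, hξeq⟩ := hslope x y hx hy hxy
    obtain ⟨η, hη, hηeq⟩ := hslope y z hy hz hyz
    rw [hξeq, hηeq]
    have hgx := (hg2 x hx).1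
    have hgy := (hg2 y hy).1
    have hgz := (hg2 z hz).1
    have hξI : ξ ∈ Ioo (-1:ℝ) 1 := ⟨lt_trans hgx.1 hξ.1, lt_trans hξ.2 hgy.2⟩
    have hηI : η ∈ Ioo (-1:ℝ) 1 := ⟨lt_trans hgy.1 hη.1, lt_trans hη.2 hgz.2⟩
    have hξη : ξ < η := lt_trans hξ.2 hη.1
    have hm := aux_sqrt_mono hξI.1 hξη hηI.2
    show -K * (η / Real.sqrt (1 - η ^ 2)) ≤ -K * (ξ / Real.sqrt (1 - ξ ^ 2))
    nlinarith [hKpos, hm]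
  exact this
end

section
/- For the standard Gaussian CDF Ψ on ℝ with density ψ, the derivative of s ↦ ψ(Ψ^{−1}(s)) exists on (0,1) and is strictly decreasing; consequently ψ∘Ψ^{−1} is strictly concave on (0,1). -/
open MeasureTheory Set Real


/-- For the standard Gaussian CDF `Ψ` with density `ψ` and inverse `g = Ψ⁻¹`, the
derivative of `s ↦ ψ(Ψ⁻¹(s))` exists on `(0,1)` and is strictly decreasing; consequently
`ψ ∘ Ψ⁻¹` is strictly concave on `(0,1)`. -/
theorem gaussian_strict_concave (ψ Ψ g : ℝ → ℝ)
    (hψ : ψ = fun t => (Real.sqrt (2 * Real.pi))⁻¹ * Real.exp (-t ^ 2 / 2))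
    (hΨ : Ψ = fun p => ∫ t in Set.Iic p, ψ t)
    (hg1 : ∀ t, g (Ψ t) = t)
    (hg2 : ∀ s ∈ Set.Ioo (0 : ℝ) 1, Ψ (g s) = s) :
    ∃ L' : ℝ → ℝ,
      (∀ s ∈ Set.Ioo (0 : ℝ) 1, HasDerivAt (fun u => ψ (g u)) (L' s) s) ∧
      StrictAntiOn L' (Set.Ioo 0 1) ∧
      StrictConcaveOn ℝ (Set.Ioo 0 1) (fun s => ψ (g s)) := by
  -- basic facts about ψ
  have hψpos : ∀ t, 0 < ψ t := by
    intro t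
    rw [hψ]
    positivity
  have hψcont : Continuous ψ := by
    rw [hψ]
    continuity
  have hψint : Integrable ψ := by
    rw [hψ]
    have : Integrable (fun t : ℝ => Real.exp (-(2⁻¹ : ℝ) * t ^ 2)) :=
      integrable_exp_neg_mul_sq (by norm_num)
    have := this.const_mul (Real.sqrt (2 * Real.pi))⁻¹
    refine this.congr ?_
    filter_upwards with t
    ring_nf
  have hψtot : ∫ t, ψ t = 1 := by
    rw [hψ]
    rw [MeasureTheory.integral_const_mul]
    have : (fun t : ℝ => Real.exp (-t ^ 2 / 2)) = fun t : ℝ => Real.exp (-(2⁻¹:ℝ) * t ^ 2) := by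
      funext t; ring_nf
    rw [this, integral_gaussian]
    rw [show (Real.pi / 2⁻¹) = 2 * Real.pi by ring]
    rw [inv_mul_cancel₀ (by positivity)]
  -- Ψ strictly monotone
  have hΨmono : StrictMono Ψ := by
    intro a b hab
    have h := intervalIntegral.integral_Iic_sub_Iic (hψint.integrableOn (s := Iic a))
      (hψint.integrableOn (s := Iic b))
    have hpos : 0 < ∫ t in a..b, ψ t :=
      intervalIntegral.intervalIntegral_pos_of_pos (hψint.intervalIntegrable) hψpos hab
    rw [hΨ]
    simp only
    linarith [h, hpos]
  -- Ψ t ∈ (0,1)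
  have hΨmem : ∀ t, Ψ t ∈ Ioo (0:ℝ) 1 := by
    intro t
    constructor
    · have h1 : Ψ (t - 1) < Ψ t := hΨmono (by linarith)
      have h0 : 0 ≤ Ψ (t - 1) := by
        rw [hΨ]
        exact MeasureTheory.setIntegral_nonneg measurableSet_Iic fun x _ => (hψpos x).le
      linarith
    · have hsum : Ψ t + ∫ x in Ioi t, ψ x = 1 := by
        rw [hΨ]
        simp only
        rw [intervalIntegral.integral_Iic_add_Ioi hψint.integrableOn hψint.integrableOn, hψtot]
      have h2 : Ψ (t + 1) - Ψ t ≤ ∫ x in Ioi t, ψ x := by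
        rw [hΨ]
        simp only
        rw [intervalIntegral.integral_Iic_sub_Iic hψint.integrableOn hψint.integrableOn,
          intervalIntegral.integral_of_le (by linarith)]
        apply MeasureTheory.setIntegral_mono_set hψint.integrableOn
          (Filter.Eventually.of_forall fun x => (hψpos x).le)
        exact HasSubset.Subset.eventuallyLE Ioc_subset_Ioi_self
      have h3 : Ψ t < Ψ (t + 1) := hΨmono (by linarith)
      linarith
  -- derivative of Ψ
  have hΨderiv : ∀ x, HasDerivAt Ψ (ψ x) x := by
    intro x
    have key : ∀ u, Ψ u = Ψ 0 + ∫ t in (0:ℝ)..u, ψ t := by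
      intro u
      rw [← intervalIntegral.integral_Iic_sub_Iic hψint.integrableOn hψint.integrableOn, hΨ]
      ring
    have h : HasDerivAt (fun u => Ψ 0 + ∫ t in (0:ℝ)..u, ψ t) (ψ x) x := by
      refine HasDerivAt.const_add _ ?_
      exact intervalIntegral.integral_hasDerivAt_right (hψint.intervalIntegrable)
        (hψcont.stronglyMeasurableAtFilter _ _) hψcont.continuousAt
    exact h.congr_of_eventuallyEq (Filter.Eventually.of_forall fun u => (key u))
  -- g strictly monotone on (0,1)
  have hgmono : StrictMonoOn g (Ioo (0:ℝ) 1) := by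
    intro a ha b hb hab
    by_contra h
    push_neg at h
    rcases eq_or_lt_of_le h with h | h
    · rw [← hg2 a ha, ← hg2 b hb, ← h] at hab; exact lt_irrefl _ hab
    · have := hΨmono h
      rw [hg2 a ha, hg2 b hb] at this
      linarith
  -- g continuous at points of (0,1)
  have hgcont : ∀ s ∈ Ioo (0:ℝ) 1, ContinuousAt g s := by
    intro s hs
    refine hgmono.continuousAt_of_image_mem_nhds (isOpen_Ioo.mem_nhds hs) ?_
    have : g '' Ioo 0 1 = univ := by
      apply eq_univ_of_forall
      intro t
      exact ⟨Ψ t, hΨmem t, hg1 t⟩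
    rw [this]
    exact Filter.univ_mem
  -- derivative of g
  have hgderiv : ∀ s ∈ Ioo (0:ℝ) 1, HasDerivAt g (ψ (g s))⁻¹ s := by
    intro s hs
    refine HasDerivAt.of_local_left_inverse (hgcont s hs) (hΨderiv (g s))
      (ne_of_gt (hψpos _)) ?_
    filter_upwards [isOpen_Ioo.mem_nhds hs] with x hx using hg2 x hx
  -- derivative of ψ
  have hψderiv : ∀ t, HasDerivAt ψ (-t * ψ t) t := by
    intro t
    rw [hψ]
    have h1 : HasDerivAt (fun t : ℝ => -t ^ 2 / 2) (-t) t := by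
      have : HasDerivAt (fun t : ℝ => -t ^ 2 / 2) (-(2 * t ^ 1) / 2) t :=
        (((hasDerivAt_pow 2 t).neg).div_const 2)
      convert this using 1
      ring
    have h2 := (h1.exp).const_mul (Real.sqrt (2 * Real.pi))⁻¹
    refine h2.congr_deriv ?_
    beta_reduce
    ring
  refine ⟨fun s => -g s, ?_, ?_, ?_⟩
  · intro s hs
    have h := ((hψderiv (g s)).comp s (hgderiv s hs))
    refine h.congr_deriv ?_
    show _ = -g s
    rw [mul_assoc, mul_inv_cancel₀ (ne_of_gt (hψpos _)), mul_one]
  · intro a ha b hb hab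
    simp only [neg_lt_neg_iff]
    exact hgmono ha hb hab
  · apply StrictAntiOn.strictConcaveOn_of_deriv (convex_Ioo 0 1)
    · intro s hs
      exact ((hψderiv (g s)).comp s (hgderiv s hs)).continuousAt.continuousWithinAt
    · rw [interior_Ioo]
      intro a ha b hb hab
      show deriv (ψ ∘ g) b < deriv (ψ ∘ g) a
      have hda := (((hψderiv (g a)).comp a (hgderiv a ha))).deriv
      have hdb := (((hψderiv (g b)).comp b (hgderiv b hb))).deriv
      rw [mul_assoc, mul_inv_cancel₀ (ne_of_gt (hψpos _)), mul_one] at hda hdb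
      rw [hda, hdb]
      simpa using hgmono ha hb hab
end

section
/- Let g : [0,1] → ℝ be continuous with g(0) = 0, g concave, g ≥ 0, and let w(s) = (1−s)^{m}(d − n s) with m = n−d−1 ≥ 0, n > d ≥ 1. If g is replaced by the linear function l(s) = g(d/n)·(ns/d), then ∫₀¹ w(s) g(s)^{d−1} ds ≥ ∫₀¹ w(s) l(s)^{d−1} ds = 0. -/
/-- Key computation: the weight integral against `s^(d-1)` vanishes, since the
integrand is the derivative of `s ^ d * (1 - s) ^ (n - d)`. -/
lemma weight_integral_zero (n d : ℕ) (hd : 1 ≤ d) (hn : d < n) :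
    (∫ s in (0:ℝ)..1, (1 - s) ^ (n - d - 1) * ((d : ℝ) - n * s) * s ^ (d - 1)) = 0 := by
  have hderiv : ∀ s ∈ Set.uIcc (0:ℝ) 1,
      HasDerivAt (fun s : ℝ => s ^ d * (1 - s) ^ (n - d))
        ((1 - s) ^ (n - d - 1) * ((d : ℝ) - n * s) * s ^ (d - 1)) s := by
    intro s _
    have h1 : HasDerivAt (fun s : ℝ => s ^ d) ((d : ℝ) * s ^ (d - 1)) s := by
      simpa using hasDerivAt_pow d s
    have h2 : HasDerivAt (fun s : ℝ => (1 - s) ^ (n - d))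
        (((n - d : ℕ) : ℝ) * (1 - s) ^ (n - d - 1) * (-1)) s := by
      have hin : HasDerivAt (fun s : ℝ => 1 - s) (-1) s := by
        simpa using (hasDerivAt_id s).const_sub 1
      simpa using (hin.fun_pow (n - d))
    have hmain := h1.fun_mul h2
    refine hmain.congr_deriv ?_
    have hcast : ((n - d : ℕ) : ℝ) = (n : ℝ) - d := by
      push_cast [Nat.cast_sub hn.le]; ring
    rw [hcast]
    obtain ⟨k, rfl⟩ : ∃ k, d = k + 1 := ⟨d - 1, by omega⟩
    obtain ⟨m, hm⟩ : ∃ m, n - (k + 1) = m + 1 := ⟨n - k - 2, by omega⟩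
    rw [hm]
    simp only [Nat.add_sub_cancel]
    push_cast
    ring
  have hint : IntervalIntegrable
      (fun s : ℝ => (1 - s) ^ (n - d - 1) * ((d : ℝ) - n * s) * s ^ (d - 1))
      MeasureTheory.volume 0 1 := by
    apply Continuous.intervalIntegrable
    exact (((continuous_const.sub continuous_id).pow _).mul
      (continuous_const.sub (continuous_const.mul continuous_id))).mul (continuous_pow _)
  have hfin := intervalIntegral.integral_eq_sub_of_hasDerivAt hderiv hint
  rw [hfin]
  have hdd : d ≠ 0 := by omega
  have hnd : n - d ≠ 0 := by omega
  simp [hdd, hnd]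

/-- Let `g : [0,1] → ℝ` be continuous, concave, nonnegative with `g 0 = 0`, and let
`w(s) = (1−s)^{n−d−1}(d − n s)` for integers `n > d ≥ 1`. With the linear function
`l(s) = g(d/n)·(n s/d)` one has `∫₀¹ w l^{d−1} = 0` and
`∫₀¹ w g^{d−1} ≥ ∫₀¹ w l^{d−1}`. -/
theorem weighted_integral_comparison (n d : ℕ) (hd : 1 ≤ d) (hn : d < n)
    (g : ℝ → ℝ) (hcont : ContinuousOn g (Set.Icc 0 1)) (h0 : g 0 = 0)
    (hconc : ConcaveOn ℝ (Set.Icc 0 1) g)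
    (hnn : ∀ s ∈ Set.Icc (0 : ℝ) 1, 0 ≤ g s)
    (l : ℝ → ℝ) (hl : ∀ s, l s = g ((d : ℝ) / n) * ((n : ℝ) * s / d)) :
    (∫ s in (0:ℝ)..1, (1 - s) ^ (n - d - 1) * ((d : ℝ) - n * s) * l s ^ (d - 1)) = 0 ∧
    (∫ s in (0:ℝ)..1, (1 - s) ^ (n - d - 1) * ((d : ℝ) - n * s) * l s ^ (d - 1))
      ≤ ∫ s in (0:ℝ)..1, (1 - s) ^ (n - d - 1) * ((d : ℝ) - n * s) * g s ^ (d - 1) := by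
  have hn0 : (0:ℝ) < n := by exact_mod_cast (by omega : 0 < n)
  have hd0 : (0:ℝ) < d := by exact_mod_cast hd
  have hdn : (d:ℝ) < n := by exact_mod_cast hn
  set c : ℝ := g ((d : ℝ) / n) with hc
  have hmem : (d : ℝ) / n ∈ Set.Icc (0:ℝ) 1 := by
    constructor
    · positivity
    · rw [div_le_one hn0]; exact hdn.le
  have hc0 : 0 ≤ c := hnn _ hmem
  -- Part 1
  have hzero :
      (∫ s in (0:ℝ)..1, (1 - s) ^ (n - d - 1) * ((d : ℝ) - n * s) * l s ^ (d - 1)) = 0 := by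
    have hcg : ∀ s : ℝ, (1 - s) ^ (n - d - 1) * ((d : ℝ) - n * s) * l s ^ (d - 1)
        = (c * n / d) ^ (d - 1) *
          ((1 - s) ^ (n - d - 1) * ((d : ℝ) - n * s) * s ^ (d - 1)) := by
      intro s
      rw [hl s]
      have h' : c * ((n : ℝ) * s / d) = (c * n / d) * s := by ring
      rw [h', mul_pow]
      ring
    rw [intervalIntegral.integral_congr (g := fun s =>
        (c * n / d) ^ (d - 1) * ((1 - s) ^ (n - d - 1) * ((d : ℝ) - n * s) * s ^ (d - 1)))
        (fun s _ => hcg s)]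
    rw [intervalIntegral.integral_const_mul, weight_integral_zero n d hd hn, mul_zero]
  refine ⟨hzero, ?_⟩
  have h0mem : (0:ℝ) ∈ Set.Icc (0:ℝ) 1 := by norm_num
  -- Chord inequalities
  have hchord1 : ∀ s ∈ Set.Icc (0:ℝ) ((d:ℝ)/n), c * ((n : ℝ) * s / d) ≤ g s := by
    intro s hs
    have hs0 : 0 ≤ s := hs.1
    have ht0 : 0 ≤ (n:ℝ) * s / d := by positivity
    have ht1 : (n:ℝ) * s / d ≤ 1 := by
      rw [div_le_one hd0]
      calc (n:ℝ) * s ≤ (n:ℝ) * ((d:ℝ)/n) := mul_le_mul_of_nonneg_left hs.2 hn0.le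
        _ = d := by field_simp
    have hcv := hconc.2 hmem h0mem ht0 (by linarith : (0:ℝ) ≤ 1 - (n:ℝ)*s/d) (by ring)
    simp only [smul_eq_mul, h0, mul_zero, add_zero] at hcv
    have harg : (n:ℝ)*s/d * ((d:ℝ)/n) = s := by
      field_simp
    rw [harg, ← hc] at hcv
    linarith [hcv]
  have hchord2 : ∀ s ∈ Set.Icc ((d:ℝ)/n) 1, g s ≤ c * ((n : ℝ) * s / d) := by
    intro s hs
    have hs0 : 0 < s := lt_of_lt_of_le (by positivity) hs.1
    have hsmem : s ∈ Set.Icc (0:ℝ) 1 := ⟨hs0.le, hs.2⟩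
    have ht0 : 0 ≤ (d:ℝ) / (n * s) := by positivity
    have ht1 : (d:ℝ) / (n * s) ≤ 1 := by
      rw [div_le_one (by positivity)]
      calc (d:ℝ) = n * ((d:ℝ)/n) := by field_simp
        _ ≤ n * s := mul_le_mul_of_nonneg_left hs.1 hn0.le
    have hcv := hconc.2 hsmem h0mem ht0 (by linarith : (0:ℝ) ≤ 1 - (d:ℝ)/(n*s)) (by ring)
    simp only [smul_eq_mul, h0, mul_zero, add_zero] at hcv
    have harg : (d:ℝ)/(n*s) * s = (d:ℝ)/n := by
      field_simp
    rw [harg, ← hc] at hcv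
    -- hcv : d/(n*s) * g s ≤ c
    have hns : (0:ℝ) < (n:ℝ) * s := by positivity
    have h1 : (d:ℝ) * g s ≤ c * ((n:ℝ) * s) := by
      have h2 := mul_le_mul_of_nonneg_right hcv hns.le
      calc (d:ℝ) * g s = ((d:ℝ)/(n*s) * g s) * ((n:ℝ)*s) := by
            field_simp
        _ ≤ c * ((n:ℝ)*s) := h2
    rw [show c * ((n:ℝ)*s/d) = (c * ((n:ℝ)*s))/d by ring, le_div_iff₀ hd0]
    nlinarith [h1]
  -- Pointwise inequality
  have hpt : ∀ s ∈ Set.Icc (0:ℝ) 1,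
      (1 - s) ^ (n - d - 1) * ((d : ℝ) - n * s) * l s ^ (d - 1)
        ≤ (1 - s) ^ (n - d - 1) * ((d : ℝ) - n * s) * g s ^ (d - 1) := by
    intro s hs
    have hpow : (0:ℝ) ≤ (1 - s) ^ (n - d - 1) := by
      apply pow_nonneg; linarith [hs.2]
    rcases le_total s ((d:ℝ)/n) with hle | hge
    · have hw : 0 ≤ (1 - s) ^ (n - d - 1) * ((d : ℝ) - n * s) := by
        apply mul_nonneg hpow
        have hns : (n:ℝ) * s ≤ d := by
          calc (n:ℝ) * s ≤ (n:ℝ) * ((d:ℝ)/n) := mul_le_mul_of_nonneg_left hle hn0.le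
            _ = d := by field_simp
        linarith
      have hls : l s ≤ g s := by rw [hl s]; exact hchord1 s ⟨hs.1, hle⟩
      have hl0 : 0 ≤ l s := by
        rw [hl s]
        have := hs.1; positivity
      exact mul_le_mul_of_nonneg_left (pow_le_pow_left₀ hl0 hls _) hw
    · have hw : (1 - s) ^ (n - d - 1) * ((d : ℝ) - n * s) ≤ 0 := by
        apply mul_nonpos_of_nonneg_of_nonpos hpow
        have hns : (d:ℝ) ≤ n * s := by
          calc (d:ℝ) = n * ((d:ℝ)/n) := by field_simp
            _ ≤ n * s := mul_le_mul_of_nonneg_left hge hn0.le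
        linarith
      have hgs : g s ≤ l s := by rw [hl s]; exact hchord2 s ⟨hge, hs.2⟩
      have hg0 : 0 ≤ g s := hnn s hs
      exact mul_le_mul_of_nonpos_left (pow_le_pow_left₀ hg0 hgs _) hw
  -- Integrability
  have hIl : IntervalIntegrable
      (fun s : ℝ => (1 - s) ^ (n - d - 1) * ((d : ℝ) - n * s) * l s ^ (d - 1))
      MeasureTheory.volume 0 1 := by
    apply Continuous.intervalIntegrable
    have hcl : Continuous l := by
      have he : l = fun s => c * ((n : ℝ) * s / d) := by
        funext s; rw [hl s]
      rw [he]
      exact continuous_const.mul ((continuous_const.mul continuous_id).div_const _)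
    exact (((continuous_const.sub continuous_id).pow _).mul
      (continuous_const.sub (continuous_const.mul continuous_id))).mul (hcl.pow _)
  have hIg : IntervalIntegrable
      (fun s : ℝ => (1 - s) ^ (n - d - 1) * ((d : ℝ) - n * s) * g s ^ (d - 1))
      MeasureTheory.volume 0 1 := by
    apply ContinuousOn.intervalIntegrable
    rw [Set.uIcc_of_le (by norm_num : (0:ℝ) ≤ 1)]
    exact (Continuous.continuousOn ((((continuous_const.sub continuous_id).pow _).mul
      (continuous_const.sub (continuous_const.mul continuous_id))))).mul (hcont.pow _)
  exact intervalIntegral.integral_mono_on (by norm_num) hIl hIg hpt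
end
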